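/- Let R be a commutative Noetherian ring of prime characteristic p whose Frobenius endomorphism is finite and flat, let a and b be ideals of R, and let q = p^e, q' = p^{e'} with e, e' positive integers. Then: (1) if a ⊆ b, then a^{[1/q]} ⊆ b^{[1/q]}; (2) (a ∩ b)^{[1/q]} ⊆ a^{[1/q]} ∩ b^{[1/q]} and a^{[1/q]} + b^{[1/q]} = (a + b)^{[1/q]}; (3) (a·b)^{[1/q]} ⊆ a^{[1/q]} · b^{[1/q]}; (4) (b^{[q']})^{[1/q]} = b^{[q'/q]} and this ideal is contained in (b^{[1/q]})^{[q']} (here, when q ≥ q', b^{[q'/q]} means b^{[1/p^{e−e'}]}, and when q' ≥ q it means b^{[p^{e'−e}]}); (5) b^{[1/(q q')]} ⊆ (b^{[1/q]})^{[1/q']}; (6) b^{[1/q]} ⊆ (b^{q'})^{[1/(q q')]}. -/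

import Mathlib

open Ideal

/-- The `q`-th bracket power `J^{[q]}` of an ideal: the ideal generated by
the `q`-th powers of the elements of `J`. -/
def bracketPow {R : Type*} [CommRing R] (J : Ideal R) (q : ℕ) : Ideal R :=
  Ideal.span ((fun x => x ^ q) '' (J : Set R))

/-- The ideal `b^{[1/q]}`: the smallest ideal `J` with `b ⊆ J^{[q]}`
(realized as the intersection of all such ideals). -/
def frobRoot {R : Type*} [CommRing R] (b : Ideal R) (q : ℕ) : Ideal R :=
  sInf {J : Ideal R | b ≤ bracketPow J q}

/-- The generalized test ideal `τ(a^c) = ⋃_{e ≥ 1} (a^{⌈c p^e⌉})^{[1/p^e]}`. -/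
noncomputable def testIdeal {R : Type*} [CommRing R] (p : ℕ) (a : Ideal R) (c : ℝ) : Ideal R :=
  ⨆ e : ℕ, frobRoot (a ^ ⌈c * (p : ℝ) ^ (e + 1)⌉₊) (p ^ (e + 1))

/-- `ν_a^J(q)`: the largest nonnegative integer `r` with `a^r ⊄ J^{[q]}`
(and `0` if there is no such `r`). -/
noncomputable def nuF {R : Type*} [CommRing R] (a J : Ideal R) (q : ℕ) : ℕ :=
  sSup {r : ℕ | ¬ a ^ r ≤ bracketPow J q}

/-- The F-threshold `c^J(a) = sup_{e ≥ 1} ν_a^J(p^e)/p^e`. -/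
noncomputable def FThreshold {R : Type*} [CommRing R] (p : ℕ) (a J : Ideal R) : ℝ :=
  ⨆ e : ℕ, (nuF a J (p ^ (e + 1)) : ℝ) / (p : ℝ) ^ (e + 1)

/-- `α > 0` is an F-jumping exponent of `a` if `τ(a^α) ≠ τ(a^c)` for all `0 ≤ c < α`. -/
def IsFJumpingExponent {R : Type*} [CommRing R] (p : ℕ) (a : Ideal R) (α : ℝ) : Prop :=
  0 < α ∧ ∀ c : ℝ, 0 ≤ c → c < α → testIdeal p a c ≠ testIdeal p a α

section CoreLemmas

open TensorProduct



/-- A linear functional maps `J • ⊤` into `J`. -/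
lemma linear_apply_mem_of_mem_smul_top {R M : Type*} [CommRing R] [AddCommGroup M] [Module R M]
    (ψ : M →ₗ[R] R) (J : Ideal R) {m : M} (hm : m ∈ (J • ⊤ : Submodule R M)) :
    ψ m ∈ J := by
  have h1 : Submodule.map ψ (J • ⊤ : Submodule R M) ≤ J := by
    rw [Submodule.map_smul'']
    refine le_trans (Submodule.smul_mono le_rfl le_top) ?_
    rw [Submodule.smul_le]
    intro r hr n _
    simpa [smul_eq_mul] using J.mul_mem_right n hr
  exact h1 ⟨m, hm, rfl⟩

/-- Key lemma: for a finite flat ring hom out of a Noetherian ring, any ideal `b` of the target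
is contained in the extension of the intersection of all `J` whose extension contains `b`. -/
lemma le_map_sInf_of_finite_flat {R S : Type*} [CommRing R] [CommRing S] [IsNoetherianRing R]
    (f : R →+* S) (hfin : f.Finite) (hflat : f.Flat) (b : Ideal S) :
    b ≤ Ideal.map f (sInf {J : Ideal R | b ≤ Ideal.map f J}) := by
  algebraize [f]
  haveI : Module.FinitePresentation R S := Module.finitePresentation_of_finite R S
  haveI hproj : Module.Projective R S :=
    (Module.freeLocus_eq_univ_iff (R := R) (M := S)).mp (Module.freeLocus_eq_univ (R := R) (M := S))
  obtain ⟨sec, hsec⟩ := Module.projective_def.mp hproj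
  intro x hx
  have hcoord : ∀ i : S, sec x i ∈ sInf {J : Ideal R | b ≤ Ideal.map f J} := by
    intro i
    rw [Ideal.mem_sInf]
    rintro J hJ
    have hx1 : x ∈ (J • ⊤ : Submodule R S) := by
      rw [Ideal.smul_top_eq_map]
      exact hJ hx
    have hx2 : sec x ∈ (J • ⊤ : Submodule R (S →₀ R)) := by
      have hmap : Submodule.map sec (J • ⊤ : Submodule R S) ≤ (J • ⊤ : Submodule R (S →₀ R)) := by
        rw [Submodule.map_smul'']
        exact Submodule.smul_mono le_rfl le_top
      exact hmap ⟨x, hx1, rfl⟩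
    exact linear_apply_mem_of_mem_smul_top (Finsupp.lapply i) J hx2
  have hx' := hsec x
  rw [← hx', Finsupp.linearCombination_apply]
  refine Ideal.sum_mem _ fun i hi => ?_
  show (sec x) i • (id i : S) ∈ _
  have : (sec x) i • (id i : S) = f ((sec x) i) * i := by
    rw [Algebra.smul_def, RingHom.algebraMap_toAlgebra]; rfl
  rw [this]
  exact Ideal.mul_mem_right _ _ (Ideal.mem_map_of_mem f (hcoord i))

/-- Descent along a flat ring hom: if `s * f x ∈ J·S` then `s ∈ (J : x)·S`. -/
lemma mem_map_colon_of_flat {R S : Type*} [CommRing R] [CommRing S]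
    (f : R →+* S) (hflat : f.Flat) (J : Ideal R) (x : R) (s : S)
    (h : s * f x ∈ Ideal.map f J) :
    s ∈ Ideal.map f (J.colon (Ideal.span {x})) := by
  algebraize [f]
  set K := J.colon (Ideal.span {x}) with hK
  have hle : (K : Submodule R R) ≤ LinearMap.ker ((J.mkQ).comp (LinearMap.mulLeft R x)) := by
    intro r hr
    simp only [LinearMap.mem_ker, LinearMap.comp_apply, LinearMap.mulLeft_apply,
      Submodule.mkQ_apply, Submodule.Quotient.mk_eq_zero]
    rw [mul_comm]
    exact Ideal.mem_colon_span_singleton.mp hr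
  set g := Submodule.liftQ (K : Submodule R R) ((J.mkQ).comp (LinearMap.mulLeft R x)) hle with hg
  have hginj : Function.Injective g := by
    rw [← LinearMap.ker_eq_bot]
    apply Submodule.ker_liftQ_eq_bot
    intro r hr
    simp only [LinearMap.mem_ker, LinearMap.comp_apply, LinearMap.mulLeft_apply,
      Submodule.mkQ_apply, Submodule.Quotient.mk_eq_zero] at hr
    exact Ideal.mem_colon_span_singleton.mpr (by rwa [mul_comm])
  have hinj : Function.Injective (LinearMap.lTensor S g) :=
    Module.Flat.lTensor_preserves_injective_linearMap g hginj
  have h0 : (LinearMap.lTensor S g) (s ⊗ₜ[R] (Ideal.Quotient.mk K 1)) =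
      s ⊗ₜ[R] (Ideal.Quotient.mk J x) := by
    have : g (Ideal.Quotient.mk K 1) = Ideal.Quotient.mk J x := by
      show g (Submodule.Quotient.mk 1) = _
      rw [hg, Submodule.liftQ_apply]
      simp only [LinearMap.comp_apply, LinearMap.mulLeft_apply, Submodule.mkQ_apply, mul_one]
      rfl
    rw [LinearMap.lTensor_tmul, this]
  have h1 : (s ⊗ₜ[R] (Ideal.Quotient.mk J x) : S ⊗[R] (R ⧸ J)) = 0 := by
    apply (tensorQuotEquivQuotSMul S J).injective
    rw [map_zero, tensorQuotEquivQuotSMul_tmul_mk, Submodule.Quotient.mk_eq_zero,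
      Ideal.smul_top_eq_map]
    show f x * s ∈ Ideal.map (algebraMap R S) J
    rw [RingHom.algebraMap_toAlgebra]
    rwa [mul_comm]
  have h2 : (s ⊗ₜ[R] (Ideal.Quotient.mk K 1) : S ⊗[R] (R ⧸ K)) = 0 := by
    apply hinj
    rw [h0, map_zero, h1]
  have h3 := congrArg (tensorQuotEquivQuotSMul S K) h2
  rw [tensorQuotEquivQuotSMul_tmul_mk, map_zero, one_smul, Submodule.Quotient.mk_eq_zero,
    Ideal.smul_top_eq_map] at h3
  rwa [RingHom.algebraMap_toAlgebra] at h3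

end CoreLemmas

section Frob
variable {R : Type*} [CommRing R] (p : ℕ) [Fact p.Prime] [CharP R p]

lemma bracketPow_eq_map (J : Ideal R) (e : ℕ) :
    bracketPow J (p ^ e) = Ideal.map (iterateFrobenius R p e) J := rfl

lemma bracketPow_mono {J K : Ideal R} (h : J ≤ K) (q : ℕ) :
    bracketPow J q ≤ bracketPow K q :=
  Ideal.span_mono (Set.image_mono h)

lemma bracketPow_le_self (J : Ideal R) {q : ℕ} (hq : 0 < q) : bracketPow J q ≤ J := by
  rw [bracketPow, Ideal.span_le]
  rintro _ ⟨y, hy, rfl⟩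
  exact J.pow_mem_of_mem hy q hq

lemma bracketPow_comp (J : Ideal R) (m n : ℕ) :
    bracketPow (bracketPow J (p ^ m)) (p ^ n) = bracketPow J (p ^ (n + m)) := by
  rw [bracketPow_eq_map, bracketPow_eq_map, bracketPow_eq_map, Ideal.map_map,
    ← iterateFrobenius_add]

lemma bracketPow_mul (a b : Ideal R) (e : ℕ) :
    bracketPow (a * b) (p ^ e) = bracketPow a (p ^ e) * bracketPow b (p ^ e) := by
  rw [bracketPow_eq_map, bracketPow_eq_map, bracketPow_eq_map, Ideal.map_mul]

lemma mem_bracketPow_of_mem {J : Ideal R} {x : R} (hx : x ∈ J) (q : ℕ) :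
    x ^ q ∈ bracketPow J q :=
  Ideal.subset_span ⟨x, hx, rfl⟩

lemma iterFrob_finite (hfin : (frobenius R p).Finite) :
    ∀ e, (iterateFrobenius R p e).Finite
  | 0 => by rw [iterateFrobenius_zero]; exact RingHom.Finite.id R
  | (e + 1) => by
      rw [iterateFrobenius_add R p e 1, iterateFrobenius_one]
      exact RingHom.Finite.comp (iterFrob_finite hfin e) hfin

lemma iterFrob_flat (hflat : (frobenius R p).Flat) :
    ∀ e, (iterateFrobenius R p e).Flat
  | 0 => by rw [iterateFrobenius_zero, ← RingHom.one_def]; exact RingHom.Flat.id (R := R)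
  | (e + 1) => by
      rw [iterateFrobenius_add R p e 1, iterateFrobenius_one]
      haveI := iterFrob_flat hflat e
      haveI := hflat
      exact RingHom.Flat.comp hflat (iterFrob_flat hflat e)

variable [IsNoetherianRing R]

lemma le_bracketPow_frobRoot (hfin : (frobenius R p).Finite) (hflat : (frobenius R p).Flat)
    (b : Ideal R) (e : ℕ) :
    b ≤ bracketPow (frobRoot b (p ^ e)) (p ^ e) := by
  have h := le_map_sInf_of_finite_flat (iterateFrobenius R p e)
    (iterFrob_finite p hfin e) (iterFrob_flat p hflat e) b
  have hset : {J : Ideal R | b ≤ Ideal.map (iterateFrobenius R p e) J}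
      = {J : Ideal R | b ≤ bracketPow J (p ^ e)} := by
    ext J; rw [Set.mem_setOf_eq, Set.mem_setOf_eq, bracketPow_eq_map]
  rw [frobRoot, bracketPow_eq_map, ← hset]
  exact h

lemma bracketPow_descent (hflat : (frobenius R p).Flat) {b J : Ideal R} {e : ℕ}
    (h : bracketPow b (p ^ e) ≤ bracketPow J (p ^ e)) : b ≤ J := by
  intro x hx
  have hx' : (1 : R) * (iterateFrobenius R p e) x ∈ Ideal.map (iterateFrobenius R p e) J := by
    rw [one_mul, ← bracketPow_eq_map]
    exact h (mem_bracketPow_of_mem hx _)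
  have h1 := mem_map_colon_of_flat (iterateFrobenius R p e) (iterFrob_flat p hflat e) J x 1 hx'
  rw [← bracketPow_eq_map] at h1
  have h2 : (1 : R) ∈ J.colon (Ideal.span {x}) :=
    bracketPow_le_self _ (pow_pos (Fact.out (p := p.Prime)).pos e) h1
  have := Ideal.mem_colon_span_singleton.mp h2
  rwa [one_mul] at this

end Frob


set_option linter.unusedVariables false in
/-- basic properties of the ideals `b^{[1/q]}`. -/
theorem stmt1_frobRoot_basic_properties
    {R : Type*} [CommRing R] [IsNoetherianRing R] (p : ℕ) [Fact p.Prime] [CharP R p]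
    (hfin : (frobenius R p).Finite) (hflat : (frobenius R p).Flat)
    (a b : Ideal R) (e e' : ℕ) (he : 1 ≤ e) (he' : 1 ≤ e') :
    (a ≤ b → frobRoot a (p ^ e) ≤ frobRoot b (p ^ e)) ∧
    (frobRoot (a ⊓ b) (p ^ e) ≤ frobRoot a (p ^ e) ⊓ frobRoot b (p ^ e)) ∧
    (frobRoot a (p ^ e) + frobRoot b (p ^ e) = frobRoot (a + b) (p ^ e)) ∧
    (frobRoot (a * b) (p ^ e) ≤ frobRoot a (p ^ e) * frobRoot b (p ^ e)) ∧
    (e' ≤ e → frobRoot (bracketPow b (p ^ e')) (p ^ e) = frobRoot b (p ^ (e - e'))) ∧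
    (e ≤ e' → frobRoot (bracketPow b (p ^ e')) (p ^ e) = bracketPow b (p ^ (e' - e))) ∧
    (frobRoot (bracketPow b (p ^ e')) (p ^ e) ≤ bracketPow (frobRoot b (p ^ e)) (p ^ e')) ∧
    (frobRoot b (p ^ (e + e')) ≤ frobRoot (frobRoot b (p ^ e)) (p ^ e')) ∧
    (frobRoot b (p ^ e) ≤ frobRoot (b ^ (p ^ e')) (p ^ (e + e'))) := by
  have K2 := le_bracketPow_frobRoot p hfin hflat
  have fr_mono : ∀ (a b : Ideal R) (q : ℕ), a ≤ b → frobRoot a q ≤ frobRoot b q := by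
    intro a b q h
    exact le_sInf fun J hJ => sInf_le (le_trans h hJ)
  refine ⟨fr_mono a b _, ?_, ?_, ?_, ?_, ?_, ?_, ?_, ?_⟩
  · exact le_inf (fr_mono _ _ _ inf_le_left) (fr_mono _ _ _ inf_le_right)
  · rw [Submodule.add_eq_sup, Submodule.add_eq_sup]
    refine le_antisymm (sup_le (fr_mono _ _ _ le_sup_left) (fr_mono _ _ _ le_sup_right)) ?_
    apply sInf_le
    show a ⊔ b ≤ bracketPow (frobRoot a (p ^ e) ⊔ frobRoot b (p ^ e)) (p ^ e)
    exact sup_le (le_trans (K2 a e) (bracketPow_mono le_sup_left _))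
      (le_trans (K2 b e) (bracketPow_mono le_sup_right _))
  · apply sInf_le
    show a * b ≤ bracketPow (frobRoot a (p ^ e) * frobRoot b (p ^ e)) (p ^ e)
    rw [bracketPow_mul]
    exact Ideal.mul_mono (K2 a e) (K2 b e)
  · intro h
    have hd : e' + (e - e') = e := Nat.add_sub_cancel' h
    refine le_antisymm (sInf_le ?_) (sInf_le ?_)
    · show bracketPow b (p ^ e') ≤ bracketPow (frobRoot b (p ^ (e - e'))) (p ^ e)
      have h2 := bracketPow_mono (K2 b (e - e')) (p ^ e')
      rwa [bracketPow_comp, hd] at h2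
    · -- b ≤ bracketPow J₁ (p ^ (e - e'))
      show b ≤ bracketPow (frobRoot (bracketPow b (p ^ e')) (p ^ e)) (p ^ (e - e'))
      set J₁ := frobRoot (bracketPow b (p ^ e')) (p ^ e)
      have hK2 := K2 (bracketPow b (p ^ e')) e
      have h3 : bracketPow b (p ^ e') ≤ bracketPow (bracketPow J₁ (p ^ (e - e'))) (p ^ e') := by
        rw [bracketPow_comp, hd]; exact hK2
      exact bracketPow_descent p hflat h3
  · intro h
    have hd : e + (e' - e) = e' := Nat.add_sub_cancel' h
    refine le_antisymm (sInf_le ?_) ?_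
    · show bracketPow b (p ^ e') ≤ bracketPow (bracketPow b (p ^ (e' - e))) (p ^ e)
      rw [bracketPow_comp, hd]
    · show bracketPow b (p ^ (e' - e)) ≤ frobRoot (bracketPow b (p ^ e')) (p ^ e)
      set J₁ := frobRoot (bracketPow b (p ^ e')) (p ^ e)
      have hK2 := K2 (bracketPow b (p ^ e')) e
      have h3 : bracketPow (bracketPow b (p ^ (e' - e))) (p ^ e) ≤ bracketPow J₁ (p ^ e) := by
        rw [bracketPow_comp, hd]; exact hK2
      exact bracketPow_descent p hflat h3
  · apply sInf_le
    show bracketPow b (p ^ e') ≤ bracketPow (bracketPow (frobRoot b (p ^ e)) (p ^ e')) (p ^ e)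
    have h1 := bracketPow_mono (K2 b e) (p ^ e')
    rw [bracketPow_comp] at h1
    rwa [bracketPow_comp, Nat.add_comm]
  · apply sInf_le
    show b ≤ bracketPow (frobRoot (frobRoot b (p ^ e)) (p ^ e')) (p ^ (e + e'))
    set J := frobRoot (frobRoot b (p ^ e)) (p ^ e')
    have h1 : frobRoot b (p ^ e) ≤ bracketPow J (p ^ e') := K2 _ e'
    have h2 : b ≤ bracketPow (bracketPow J (p ^ e')) (p ^ e) :=
      le_trans (K2 b e) (bracketPow_mono h1 _)
    rwa [bracketPow_comp] at h2
  · apply sInf_le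
    show b ≤ bracketPow (frobRoot (b ^ p ^ e') (p ^ (e + e'))) (p ^ e)
    set K := frobRoot (b ^ p ^ e') (p ^ (e + e'))
    intro x hx
    have h1 : x ^ p ^ e' ∈ b ^ p ^ e' := Ideal.pow_mem_pow hx _
    have h2 : b ^ p ^ e' ≤ bracketPow K (p ^ (e + e')) := K2 _ _
    have h3 : bracketPow (Ideal.span {x}) (p ^ e') ≤
        bracketPow (bracketPow K (p ^ e)) (p ^ e') := by
      rw [bracketPow_comp, bracketPow_eq_map, Ideal.map_span, Set.image_singleton,
        Ideal.span_le, Set.singleton_subset_iff]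
      rw [Nat.add_comm] at h2
      exact h2 h1
    exact bracketPow_descent p hflat h3 (Ideal.mem_span_singleton_self x)
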